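/- Let α ∈ (0,1] and let φ, ψ : ℕ₊ → ℕ₊ be strictly increasing functions with δ_α(C_φ) = 0 and δ_α(C_ψ) = 0. Then the set { φ(ψ(n+1)) / φ(ψ(n)) : n ∈ ℕ₊ } is bounded. -/

import Mathlib

/-- The `α`-density of a set `A` of positive integers is `d` if
`#(A ∩ [1,n]) / n^α → d` as `n → ∞` (here `n^α` is the real power `rpow`). -/
def HasAlphaDensity (α : ℝ) (A : Set ℕ+) (d : ℝ) : Prop :=
  Filter.Tendsto (fun n : ℕ+ => ((A ∩ Set.Iic n).ncard : ℝ) / (n : ℝ) ^ α)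
    Filter.atTop (nhds d)

lemma pnat_ncard_Iic (n : ℕ+) : (Set.Iic n).ncard = n := by
  rw [← Set.Icc_bot, show (⊥ : ℕ+) = 1 from rfl, ← Finset.coe_Icc, Set.ncard_coe_finset,
    PNat.card_Icc]
  simp

lemma key_bound (α : ℝ) (h0 : 0 < α) (h1 : α ≤ 1) (φ : ℕ+ → ℕ+) (hφ : StrictMono φ)
    (hφd : HasAlphaDensity α (Set.range φ)ᶜ 0) :
    ∃ N : ℕ+, ∀ n ≥ N, (φ n : ℝ) ≤ 2 * n := by
  have hcount : ∀ n : ℕ+, (((Set.range φ)ᶜ ∩ Set.Iic (φ n)).ncard : ℝ)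
      = (φ n : ℝ) - n := by
    intro n
    have h1' : (Set.range φ)ᶜ ∩ Set.Iic (φ n) = Set.Iic (φ n) \ (Set.range φ ∩ Set.Iic (φ n)) := by
      ext x; simp only [Set.mem_inter_iff, Set.mem_compl_iff, Set.mem_diff, Set.mem_Iic]; tauto
    have h2' : Set.range φ ∩ Set.Iic (φ n) = φ '' Set.Iic n := by
      ext x
      constructor
      · rintro ⟨⟨k, rfl⟩, hx⟩; exact ⟨k, (hφ.le_iff_le).mp hx, rfl⟩
      · rintro ⟨k, hk, rfl⟩; exact ⟨⟨k, rfl⟩, hφ.monotone hk⟩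
    rw [h1', Set.ncard_diff (Set.inter_subset_right) ((Set.finite_Iic _).subset Set.inter_subset_right), h2',
      Set.ncard_image_of_injective _ hφ.injective, pnat_ncard_Iic, pnat_ncard_Iic,
      Nat.cast_sub (by exact_mod_cast hφ.le_apply)]
  have htend : Filter.Tendsto (fun n : ℕ+ => ((φ n : ℝ) - n) / (φ n : ℝ) ^ α)
      Filter.atTop (nhds 0) := by
    have hφtop : Filter.Tendsto φ Filter.atTop Filter.atTop :=
      Filter.tendsto_atTop_atTop_of_monotone hφ.monotone (fun b => ⟨b, hφ.le_apply⟩)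
    have := hφd.comp hφtop
    simpa only [Function.comp_def, hcount] using this
  have hev := htend.eventually_lt_const (by norm_num : (0:ℝ) < 1/2)
  rw [Filter.eventually_atTop] at hev
  obtain ⟨N, hN⟩ := hev
  refine ⟨N, fun n hn => ?_⟩
  have h := hN n hn
  have hφn1 : (1 : ℝ) ≤ (φ n : ℝ) := by exact_mod_cast (φ n).one_le
  have hpow_pos : (0:ℝ) < (φ n : ℝ) ^ α := Real.rpow_pos_of_pos (by linarith) α
  have h2 : (φ n : ℝ) - n < (1/2) * (φ n : ℝ) ^ α := by
    rw [div_lt_iff₀ hpow_pos] at h; linarith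
  have h3 : (φ n : ℝ) ^ α ≤ (φ n : ℝ) := by
    calc (φ n : ℝ) ^ α ≤ (φ n : ℝ) ^ (1:ℝ) :=
      Real.rpow_le_rpow_of_exponent_le hφn1 h1
    _ = (φ n : ℝ) := Real.rpow_one _
  linarith

/-- let `α ∈ (0,1]` and let `φ, ψ : ℕ₊ → ℕ₊` be strictly increasing
with `δ_α(C_φ) = 0` and `δ_α(C_ψ) = 0` (where `C_φ = ℕ₊ \ range φ`).  Then the set
`{ φ(ψ(n+1)) / φ(ψ(n)) : n ∈ ℕ₊ }` is bounded. -/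
theorem stmt4 (α : ℝ) (h0 : 0 < α) (h1 : α ≤ 1)
    (φ ψ : ℕ+ → ℕ+) (hφ : StrictMono φ) (hψ : StrictMono ψ)
    (hφd : HasAlphaDensity α (Set.range φ)ᶜ 0)
    (hψd : HasAlphaDensity α (Set.range ψ)ᶜ 0) :
    ∃ M : ℝ, ∀ n : ℕ+, (φ (ψ (n + 1)) : ℝ) / (φ (ψ n) : ℝ) ≤ M := by
  obtain ⟨Nφ, hNφ⟩ := key_bound α h0 h1 φ hφ hφd
  obtain ⟨Nψ, hNψ⟩ := key_bound α h0 h1 ψ hψ hψd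
  set N : ℕ+ := max Nφ Nψ with hN
  refine ⟨max 8 (φ (ψ (N + 1)) : ℝ), fun n => ?_⟩
  have hsucc : n < n + 1 := PNat.lt_add_right n 1
  rcases le_or_gt n N with hn | hn
  · -- small n : bound by φ(ψ(N+1))
    have hnum : (φ (ψ (n + 1)) : ℝ) ≤ (φ (ψ (N + 1)) : ℝ) := by
      exact_mod_cast (hφ.monotone (hψ.monotone (add_le_add_left hn 1)))
    have hden : (1 : ℝ) ≤ (φ (ψ n) : ℝ) := by exact_mod_cast (φ (ψ n)).one_le
    calc (φ (ψ (n + 1)) : ℝ) / (φ (ψ n) : ℝ)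
        ≤ (φ (ψ (n + 1)) : ℝ) / 1 := by
          apply div_le_div_of_nonneg_left (by positivity) (by norm_num) hden
      _ = (φ (ψ (n + 1)) : ℝ) := by ring
      _ ≤ max 8 (φ (ψ (N + 1)) : ℝ) := le_max_of_le_right hnum
  · -- large n
    have hn1 : Nψ ≤ n + 1 := le_trans (le_max_right _ _) (le_of_lt (hn.trans hsucc))
    have hψb : (ψ (n + 1) : ℝ) ≤ 2 * ((n : ℝ) + 1) := by
      have := hNψ (n + 1) hn1
      simpa using this
    have hφarg : Nφ ≤ ψ (n + 1) :=
      le_trans (le_max_left Nφ Nψ) (le_trans hn.le (le_trans (le_of_lt hsucc) hψ.le_apply))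
    have hφb : (φ (ψ (n + 1)) : ℝ) ≤ 2 * (ψ (n + 1) : ℝ) := hNφ _ hφarg
    have hden : (n : ℝ) ≤ (φ (ψ n) : ℝ) := by
      exact_mod_cast le_trans hψ.le_apply hφ.le_apply
    have hnpos : (0 : ℝ) < (n : ℝ) := by exact_mod_cast n.pos
    have hdenpos : (0 : ℝ) < (φ (ψ n) : ℝ) := lt_of_lt_of_le hnpos hden
    have h8 : (φ (ψ (n + 1)) : ℝ) / (φ (ψ n) : ℝ) ≤ 8 := by
      rw [div_le_iff₀ hdenpos]
      have hn1' : (1 : ℝ) ≤ (n : ℝ) := by exact_mod_cast n.one_le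
      nlinarith
    exact le_trans h8 (le_max_left _ _)
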